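/- Let (Z_t)_{t∈ℤ} be an i.i.d. sequence of real random variables with 𝔼|Z₀| < ∞, and let α, γ, δ ∈ ℝ and β ∈ ℝ with |β| < 1. Then for each t ∈ ℤ the series λ_t := α/(1−β) + Σ_{k=1}^{∞} β^{k−1} (γZ_{t−k} + δ|Z_{t−k}|) converges almost surely, the process (λ_t)_{t∈ℤ} is such that λ_t is measurable with respect to σ(Z_{t−1}, Z_{t−2}, …), and almost surely λ_{t+1} = α + β λ_t + γ Z_t + δ |Z_t| for every t ∈ ℤ. -/

import Mathlib

open MeasureTheory ProbabilityTheory Filter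
open scoped ENNReal NNReal Topology

/-- A pointwise `tsum` of measurable real-valued functions is measurable. -/
lemma measurable_tsum_real {Ω : Type*} {m : MeasurableSpace Ω} {g : ℕ → Ω → ℝ}
    (hg : ∀ k, Measurable[m] (g k)) :
    Measurable[m] fun ω => ∑' k, g k ω := by
  classical
  set S : Set Ω := {ω | Summable fun k => g k ω} with hSdef
  have hS : MeasurableSet[m] S := by
    have hset : S = {ω | (∑' k, (‖g k ω‖₊ : ℝ≥0∞)) ≠ ⊤} := by
      ext ω
      simp only [S, Set.mem_setOf_eq]
      rw [ENNReal.tsum_coe_ne_top_iff_summable]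
      constructor
      · intro h
        have := h.abs
        simpa [← NNReal.summable_coe, coe_nnnorm, Real.norm_eq_abs] using this
      · intro h
        have : Summable fun k => ‖g k ω‖ := by
          simpa [← NNReal.summable_coe, coe_nnnorm] using h
        exact this.of_norm
    rw [hset]
    have hmeas : Measurable[m] fun ω => ∑' k, (‖g k ω‖₊ : ℝ≥0∞) :=
      Measurable.ennreal_tsum fun k => (hg k).nnnorm.coe_nnreal_ennreal
    have := (hmeas (measurableSet_singleton (⊤ : ℝ≥0∞))).compl
    convert this using 1
    rfl
  set F : ℕ → Ω → ℝ := fun n => S.indicator fun ω => ∑ i ∈ Finset.range n, g i ω with hF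
  have hFmeas : ∀ n, Measurable[m] (F n) := fun n =>
    (Finset.measurable_sum _ fun i _ => hg i).indicator hS
  have hlim : Tendsto F atTop (𝓝 fun ω => ∑' k, g k ω) := by
    rw [tendsto_pi_nhds]
    intro ω
    by_cases hω : Summable fun k => g k ω
    · have hmem : ω ∈ S := hω
      simp only [F, Set.indicator_of_mem hmem]
      exact hω.hasSum.tendsto_sum_nat
    · have hmem : ω ∉ S := hω
      simp only [F, Set.indicator_of_notMem hmem, tsum_eq_zero_of_not_summable hω]
      exact tendsto_const_nhds
  exact measurable_of_tendsto_metrizable hFmeas hlim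

/-- MA(∞) representation of the log squared volatility of the stationary EGARCH(1,1)
model: for an i.i.d. integrable sequence `(Z_t)` and `|β| < 1`, the series
`λ_t = α/(1-β) + Σ_{k≥1} β^{k-1}(γ Z_{t-k} + δ|Z_{t-k}|)` converges a.s., `λ_t` is
measurable w.r.t. `σ(Z_{t-1}, Z_{t-2}, …)`, and a.s. `λ_{t+1} = α + βλ_t + γZ_t + δ|Z_t|`
for all `t`. -/
theorem egarch_ma_infty_representation
    {Ω : Type*} [MeasurableSpace Ω] (μ : Measure Ω) [IsProbabilityMeasure μ]
    (Z : ℤ → Ω → ℝ) (hZmeas : ∀ t, Measurable (Z t))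
    (hindep : iIndepFun Z μ)
    (hident : ∀ t, IdentDistrib (Z t) (Z 0) μ μ)
    (hint : Integrable (Z 0) μ)
    (α β γ δ : ℝ) (hβ : |β| < 1)
    (lam : ℤ → Ω → ℝ)
    (hlam : ∀ t ω, lam t ω = α / (1 - β) +
      ∑' k : ℕ, β ^ k * (γ * Z (t - (k + 1)) ω + δ * |Z (t - (k + 1)) ω|)) :
    (∀ t : ℤ, ∀ᵐ ω ∂μ, Summable fun k : ℕ =>
        β ^ k * (γ * Z (t - (k + 1)) ω + δ * |Z (t - (k + 1)) ω|)) ∧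
    (∀ t : ℤ, Measurable[⨆ s : {s : ℤ // s < t}, MeasurableSpace.comap (Z s.1) inferInstance]
        (lam t)) ∧
    (∀ᵐ ω ∂μ, ∀ t : ℤ, lam (t + 1) ω = α + β * lam t ω + γ * Z t ω + δ * |Z t ω|) := by
  classical
  -- abbreviation for the terms of the series
  set f : ℤ → ℕ → Ω → ℝ := fun t k ω =>
    β ^ k * (γ * Z (t - (k + 1)) ω + δ * |Z (t - (k + 1)) ω|) with hf
  have hfmeas : ∀ t k, Measurable (f t k) := fun t k =>
    (((hZmeas _).const_mul γ).add ((hZmeas _).abs.const_mul δ)).const_mul _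
  -- the common (finite) lintegral of |Z s|
  have hZlint : ∀ s : ℤ, ∫⁻ ω, (‖Z s ω‖₊ : ℝ≥0∞) ∂μ = ∫⁻ ω, (‖Z 0 ω‖₊ : ℝ≥0∞) ∂μ := by
    intro s
    exact ((hident s).comp (measurable_coe_nnreal_ennreal.comp measurable_nnnorm)).lintegral_eq
  have hZfin : ∫⁻ ω, (‖Z 0 ω‖₊ : ℝ≥0∞) ∂μ < ⊤ := hint.2
  -- pointwise bound on the lintegral of each term
  have hbound : ∀ t k, ∫⁻ ω, (‖f t k ω‖₊ : ℝ≥0∞) ∂μ ≤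
      (‖β‖₊ : ℝ≥0∞) ^ k * (((‖γ‖₊ + ‖δ‖₊ : ℝ≥0) : ℝ≥0∞) * ∫⁻ ω, (‖Z 0 ω‖₊ : ℝ≥0∞) ∂μ) := by
    intro t k
    have hpt : ∀ ω, (‖f t k ω‖₊ : ℝ≥0∞) ≤
        (‖β‖₊ : ℝ≥0∞) ^ k * (((‖γ‖₊ + ‖δ‖₊ : ℝ≥0) : ℝ≥0∞) * (‖Z (t - (k + 1)) ω‖₊ : ℝ≥0∞)) := by
      intro ω
      have h1 : ‖f t k ω‖₊ ≤ ‖β‖₊ ^ k * ((‖γ‖₊ + ‖δ‖₊) * ‖Z (t - (k + 1)) ω‖₊) := by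
        simp only [hf, nnnorm_mul, nnnorm_pow]
        refine mul_le_mul_of_nonneg_left ?_ zero_le
        calc ‖γ * Z (t - (k + 1)) ω + δ * |Z (t - (k + 1)) ω|‖₊
            ≤ ‖γ * Z (t - (k + 1)) ω‖₊ + ‖δ * |Z (t - (k + 1)) ω|‖₊ := nnnorm_add_le _ _
          _ = (‖γ‖₊ + ‖δ‖₊) * ‖Z (t - (k + 1)) ω‖₊ := by
              simp [nnnorm_mul, Real.nnnorm_abs, add_mul]
      calc (‖f t k ω‖₊ : ℝ≥0∞) ≤ ((‖β‖₊ ^ k * ((‖γ‖₊ + ‖δ‖₊) * ‖Z (t - (k + 1)) ω‖₊) : ℝ≥0) : ℝ≥0∞) :=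
            ENNReal.coe_le_coe.mpr h1
        _ = (‖β‖₊ : ℝ≥0∞) ^ k * (((‖γ‖₊ + ‖δ‖₊ : ℝ≥0) : ℝ≥0∞) * (‖Z (t - (k + 1)) ω‖₊ : ℝ≥0∞)) := by
            push_cast; ring
    calc ∫⁻ ω, (‖f t k ω‖₊ : ℝ≥0∞) ∂μ
        ≤ ∫⁻ ω, (‖β‖₊ : ℝ≥0∞) ^ k *
            (((‖γ‖₊ + ‖δ‖₊ : ℝ≥0) : ℝ≥0∞) * (‖Z (t - (k + 1)) ω‖₊ : ℝ≥0∞)) ∂μ :=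
          lintegral_mono hpt
      _ = (‖β‖₊ : ℝ≥0∞) ^ k * (((‖γ‖₊ + ‖δ‖₊ : ℝ≥0) : ℝ≥0∞) * ∫⁻ ω, (‖Z (t - (k + 1)) ω‖₊ : ℝ≥0∞) ∂μ) := by
          rw [lintegral_const_mul _ ((hZmeas _).nnnorm.coe_nnreal_ennreal.const_mul _),
            lintegral_const_mul _ (hZmeas _).nnnorm.coe_nnreal_ennreal]
      _ = _ := by rw [hZlint]
  -- the series of lintegrals is finite
  have hβnn' : ‖β‖₊ < 1 := by
    rw [← NNReal.coe_lt_coe]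
    simpa [Real.norm_eq_abs] using hβ
  have hβnn : (‖β‖₊ : ℝ≥0∞) < 1 := by
    rw [← ENNReal.coe_one, ENNReal.coe_lt_coe]; exact hβnn'
  have htsum_fin : ∀ t : ℤ, ∑' k : ℕ, ∫⁻ ω, (‖f t k ω‖₊ : ℝ≥0∞) ∂μ ≠ ⊤ := by
    intro t
    refine ne_top_of_le_ne_top ?_ (ENNReal.tsum_le_tsum (hbound t))
    rw [ENNReal.tsum_mul_right, ENNReal.tsum_geometric]
    refine ENNReal.mul_ne_top ?_ (ENNReal.mul_ne_top ENNReal.coe_ne_top hZfin.ne)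
    simp [ENNReal.inv_ne_top, tsub_eq_zero_iff_le, not_le, hβnn']
  -- a.s. summability for each t
  have hsummable : ∀ t : ℤ, ∀ᵐ ω ∂μ, Summable fun k : ℕ => f t k ω := by
    intro t
    have h1 : ∫⁻ ω, ∑' k, (‖f t k ω‖₊ : ℝ≥0∞) ∂μ ≠ ⊤ := by
      rw [lintegral_tsum fun k => (hfmeas t k).nnnorm.coe_nnreal_ennreal.aemeasurable]
      exact htsum_fin t
    have hmeas : Measurable fun ω => ∑' k, (‖f t k ω‖₊ : ℝ≥0∞) :=
      Measurable.ennreal_tsum fun k => (hfmeas t k).nnnorm.coe_nnreal_ennreal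
    filter_upwards [ae_lt_top hmeas h1] with ω hω
    have h2 : Summable fun k => ‖f t k ω‖₊ :=
      ENNReal.tsum_coe_ne_top_iff_summable.mp hω.ne
    have h3 : Summable fun k => ‖f t k ω‖ := by
      simpa [coe_nnnorm] using NNReal.summable_coe.mpr h2
    exact h3.of_norm
  refine ⟨hsummable, ?_, ?_⟩
  · -- measurability
    intro t
    set m := ⨆ s : {s : ℤ // s < t}, MeasurableSpace.comap (Z s.1) inferInstance with hm
    have hZm : ∀ s : ℤ, s < t → Measurable[m] (Z s) := by
      intro s hs
      rw [measurable_iff_comap_le]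
      exact le_iSup (fun s : {s : ℤ // s < t} =>
        MeasurableSpace.comap (Z s.1) inferInstance) ⟨s, hs⟩
    have hgm : ∀ k : ℕ, Measurable[m] (f t k) := by
      intro k
      have hlt : (t - (k + 1) : ℤ) < t := by omega
      exact (((hZm _ hlt).const_mul γ).add ((hZm _ hlt).abs.const_mul δ)).const_mul _
    have : lam t = fun ω => α / (1 - β) + ∑' k : ℕ, f t k ω := funext fun ω => hlam t ω
    rw [this]
    exact (measurable_tsum_real hgm).const_add _
  · -- recursion
    have hae : ∀ᵐ ω ∂μ, ∀ t : ℤ, Summable fun k : ℕ => f t k ω :=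
      (ae_all_iff).mpr hsummable
    filter_upwards [hae] with ω hω
    intro t
    have hβ1 : (1 : ℝ) - β ≠ 0 := by
      intro h
      have : β = 1 := by linarith
      rw [this] at hβ; simp at hβ
    have hshift : (fun k : ℕ => f (t + 1) k ω) =
        fun k : ℕ => β ^ k * (γ * Z (t + 1 - (k + 1)) ω + δ * |Z (t + 1 - (k + 1)) ω|) := rfl
    have h0 : ∑' k : ℕ, f (t + 1) k ω = f (t + 1) 0 ω + ∑' k : ℕ, f (t + 1) (k + 1) ω :=
      Summable.tsum_eq_zero_add (hω (t + 1))
    have hidx : ∀ k : ℕ, f (t + 1) (k + 1) ω = β * f t k ω := by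
      intro k
      simp only [hf]
      have : (t + 1 - (↑(k + 1) + 1) : ℤ) = t - (↑k + 1) := by push_cast; ring
      rw [this, pow_succ']
      ring
    have h1 : ∑' k : ℕ, f (t + 1) (k + 1) ω = β * ∑' k : ℕ, f t k ω := by
      simp_rw [hidx]
      exact tsum_mul_left
    have h00 : f (t + 1) 0 ω = γ * Z t ω + δ * |Z t ω| := by
      simp [hf]
    rw [hlam, hlam, h0, h1, h00]
    field_simp
    ring
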